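/- Let X be a random variable on a discrete probability space with finite range 𝒳 and let ρ be a random state on a finite-dimensional complex Hilbert space, defined on the same probability space. Then d(X | ρ) ≤ (1/2) · 2^{S₀([ρ])/2} · √( |𝒳| · D(X | ρ) ). -/

import Mathlib

open Matrix
open scoped Kronecker ComplexOrder

noncomputable section

/-- A density operator: positive semidefinite with trace one. -/
def IsDensityOp {d : Type*} [Fintype d] [DecidableEq d] (ρ : Matrix d d ℂ) : Prop :=
  ρ.PosSemidef ∧ ρ.trace = 1

/-- The operator absolute value `|A| = (A Aᴴ)^(1/2)`. -/
noncomputable def matAbs {d : Type*} [Fintype d] [DecidableEq d] (A : Matrix d d ℂ) :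
    Matrix d d ℂ :=
  (Matrix.posSemidef_self_mul_conjTranspose A).1.eigenvectorUnitary.1 *
    Matrix.diagonal (((↑) : ℝ → ℂ) ∘ Real.sqrt ∘
      (Matrix.posSemidef_self_mul_conjTranspose A).1.eigenvalues) *
    (star (Matrix.posSemidef_self_mul_conjTranspose A).1.eigenvectorUnitary : Matrix d d ℂ)

/-- Trace distance `δ(ρ,σ) = (1/2) tr|ρ-σ|`. -/
noncomputable def traceDist {d : Type*} [Fintype d] [DecidableEq d]
    (ρ σ : Matrix d d ℂ) : ℝ :=
  (1 / 2) * (matAbs (ρ - σ)).trace.re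

/-- Squared Hilbert-Schmidt distance `Δ(ρ,σ) = tr((ρ-σ)²)`. -/
noncomputable def hsDistSq {d : Type*} [Fintype d] [DecidableEq d]
    (ρ σ : Matrix d d ℂ) : ℝ :=
  ((ρ - σ) * (ρ - σ)).trace.re

/-- Expectation of a random state. -/
noncomputable def expState {Ω d : Type*} [Fintype d]
    (P : Ω → ℝ) (ρ : Ω → Matrix d d ℂ) : Matrix d d ℂ :=
  ∑' ω, P ω • ρ ω

/-- Probability of an event. -/
noncomputable def prEvent {Ω : Type*} (P : Ω → ℝ) (E : Set Ω) : ℝ :=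
  ∑' ω, E.indicator P ω

/-- Conditional expectation `[ρ | E]` of a random state given an event. -/
noncomputable def condExpState {Ω d : Type*} [Fintype d]
    (P : Ω → ℝ) (ρ : Ω → Matrix d d ℂ) (E : Set Ω) : Matrix d d ℂ :=
  (prEvent P E)⁻¹ • ∑' ω, E.indicator (fun ω => P ω • ρ ω) ω

/-- The classical state `|x⟩⟨x|`. -/
noncomputable def classicalState {𝒳 : Type*} [Fintype 𝒳] [DecidableEq 𝒳] (x : 𝒳) :
    Matrix 𝒳 𝒳 ℂ :=
  Matrix.single x x 1

/-- The fully mixed state on `𝒳`. -/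
noncomputable def uniformState (𝒳 : Type*) [Fintype 𝒳] [DecidableEq 𝒳] : Matrix 𝒳 𝒳 ℂ :=
  (Fintype.card 𝒳 : ℂ)⁻¹ • (1 : Matrix 𝒳 𝒳 ℂ)

/-- Non-uniformity `d(X|ρ) = δ([{X} ⊗ ρ], [{U}] ⊗ [ρ])`. -/
noncomputable def nonUnif {Ω 𝒳 d : Type*} [Fintype 𝒳] [DecidableEq 𝒳]
    [Fintype d] [DecidableEq d]
    (P : Ω → ℝ) (X : Ω → 𝒳) (ρ : Ω → Matrix d d ℂ) : ℝ :=
  traceDist (expState P (fun ω => classicalState (X ω) ⊗ₖ ρ ω))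
    (uniformState 𝒳 ⊗ₖ expState P ρ)

/-- `D(X|ρ) = Δ([{X} ⊗ ρ], [{U}] ⊗ [ρ])`. -/
noncomputable def DNonUnif {Ω 𝒳 d : Type*} [Fintype 𝒳] [DecidableEq 𝒳]
    [Fintype d] [DecidableEq d]
    (P : Ω → ℝ) (X : Ω → 𝒳) (ρ : Ω → Matrix d d ℂ) : ℝ :=
  hsDistSq (expState P (fun ω => classicalState (X ω) ⊗ₖ ρ ω))
    (uniformState 𝒳 ⊗ₖ expState P ρ)

/-- Rényi entropy of order 0: `log₂ rank ρ`. -/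
noncomputable def renyiS0 {d : Type*} [Fintype d] [DecidableEq d] (ρ : Matrix d d ℂ) : ℝ :=
  Real.logb 2 (ρ.rank)

/-- Rényi entropy of order 2: `-log₂ tr(ρ²)`. -/
noncomputable def renyiS2 {d : Type*} [Fintype d] [DecidableEq d] (ρ : Matrix d d ℂ) : ℝ :=
  -Real.logb 2 ((ρ * ρ).trace.re)

/-- Maximal eigenvalue of a Hermitian matrix. -/
noncomputable def lambdaMax {d : Type*} [Fintype d] [DecidableEq d] (ρ : Matrix d d ℂ) : ℝ :=
  if h : ρ.IsHermitian then ⨆ i, h.eigenvalues i else 0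

/-- Von Neumann entropy `S(ρ) = -tr(ρ log₂ ρ)` (in bits). -/
noncomputable def vnEntropy {d : Type*} [Fintype d] [DecidableEq d] (ρ : Matrix d d ℂ) : ℝ :=
  if h : ρ.IsHermitian then -∑ i, h.eigenvalues i * Real.logb 2 (h.eigenvalues i) else 0

/-- Smooth Rényi entropy of order 0. -/
noncomputable def smoothS0 {d : Type*} [Fintype d] [DecidableEq d]
    (ε : ℝ) (ρ : Matrix d d ℂ) : ℝ :=
  sInf {x : ℝ | ∃ σ : Matrix d d ℂ,
    IsDensityOp σ ∧ traceDist ρ σ ≤ ε ∧ x = Real.logb 2 (σ.rank)}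

/-- Smooth Rényi entropy of order ∞. -/
noncomputable def smoothSinf {d : Type*} [Fintype d] [DecidableEq d]
    (ε : ℝ) (ρ : Matrix d d ℂ) : ℝ :=
  sSup {x : ℝ | ∃ σ : Matrix d d ℂ,
    IsDensityOp σ ∧ traceDist ρ σ ≤ ε ∧ x = -Real.logb 2 (lambdaMax σ)}


section Aux
set_option linter.unusedSectionVars false

variable {d : Type*} [Fintype d] [DecidableEq d]

open scoped MatrixOrder in
lemma matAbs_eq_cfcSqrt (A : Matrix d d ℂ) :
    matAbs A = CFC.sqrt (A * Aᴴ) := by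
  rw [CFC.sqrt_eq_cfc, cfc_nnreal_eq_real _ (A * Aᴴ) (Matrix.posSemidef_self_mul_conjTranspose A).nonneg,
    (Matrix.posSemidef_self_mul_conjTranspose A).1.cfc_eq]
  simp only [IsHermitian.cfc, matAbs, Unitary.conjStarAlgAut_apply]
  congr 3
  funext i
  simp [max_eq_left ((Matrix.posSemidef_self_mul_conjTranspose A).eigenvalues_nonneg i)]

open scoped MatrixOrder in
lemma matAbs_psd (A : Matrix d d ℂ) : (matAbs A).PosSemidef := by
  rw [matAbs_eq_cfcSqrt]; exact (CFC.sqrt_nonneg _).posSemidef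

open scoped MatrixOrder in
lemma matAbs_mul_self (A : Matrix d d ℂ) : matAbs A * matAbs A = A * Aᴴ := by
  rw [matAbs_eq_cfcSqrt]
  exact CFC.sqrt_mul_sqrt_self _ (Matrix.posSemidef_self_mul_conjTranspose A).nonneg

open scoped MatrixOrder in
lemma eq_matAbs_of_sq_eq {A B : Matrix d d ℂ}
    (hB : B.PosSemidef) (h : B ^ 2 = A * Aᴴ) : B = matAbs A := by
  rw [matAbs_eq_cfcSqrt]
  exact (CFC.sqrt_unique (by rw [← pow_two, h]) hB.nonneg).symm

lemma isHermitian_smul_of_star_eq {M : Matrix d d ℂ} (h : M.IsHermitian) {c : ℂ}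
    (hc : star c = c) : (c • M).IsHermitian := by
  unfold Matrix.IsHermitian
  rw [Matrix.conjTranspose_smul, hc, h.eq]

lemma smul_posSemidef {r : ℝ} (hr : 0 ≤ r) {M : Matrix d d ℂ} (hM : M.PosSemidef) :
    (r • M).PosSemidef := by
  refine Matrix.posSemidef_iff_dotProduct_mulVec.mpr ⟨?_, ?_⟩
  · unfold Matrix.IsHermitian
    rw [Matrix.conjTranspose_smul, star_trivial, hM.1.eq]
  · intro v
    rw [Matrix.smul_mulVec, dotProduct_smul]
    have h := hM.dotProduct_mulVec_nonneg v
    rw [Complex.nonneg_iff] at h ⊢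
    constructor
    · simpa [Complex.real_smul] using mul_nonneg hr h.1
    · simp [Complex.real_smul, ← h.2]

lemma quad_expand (M : Matrix d d ℂ) (v : d → ℂ) :
    star v ⬝ᵥ M *ᵥ v = ∑ p : d × d, star (v p.1) * (M p.1 p.2 * v p.2) := by
  rw [Fintype.sum_prod_type]
  simp only [dotProduct, Matrix.mulVec, Pi.star_apply, Finset.mul_sum]

lemma psd_trace_re_nonneg {M : Matrix d d ℂ} (hM : M.PosSemidef) : 0 ≤ M.trace.re := by
  have h : ∀ k, 0 ≤ M k k := by
    intro k
    have h2 := hM.dotProduct_mulVec_nonneg (Pi.single k 1)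
    have hst : star (Pi.single k 1 : d → ℂ) = Pi.single k 1 := by
      ext l; by_cases h : l = k <;> simp [Pi.single_apply, h]
    rwa [hst, Matrix.mulVec_single, dotProduct, Finset.sum_eq_single k
      (by intro b _ hb; simp [Pi.single_apply, hb]) (by simp), Pi.single_apply,
      if_pos rfl, one_mul, Pi.smul_apply, MulOpposite.smul_eq_mul_unop, MulOpposite.unop_op,
      Matrix.col_apply, mul_one] at h2
  rw [Matrix.trace, Complex.re_sum]
  exact Finset.sum_nonneg fun i _ => (Complex.nonneg_iff.mp (h i)).1


lemma diag_nonneg' {M : Matrix d d ℂ} (hM : M.PosSemidef) (k : d) : 0 ≤ M k k := by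
  have h2 := hM.dotProduct_mulVec_nonneg (Pi.single k 1)
  have hst : star (Pi.single k 1 : d → ℂ) = Pi.single k 1 := by
    ext l; by_cases h : l = k <;> simp [Pi.single_apply, h]
  rwa [hst, Matrix.mulVec_single, dotProduct, Finset.sum_eq_single k
    (by intro b _ hb; simp [Pi.single_apply, hb]) (by simp), Pi.single_apply,
    if_pos rfl, one_mul, Pi.smul_apply, MulOpposite.smul_eq_mul_unop, MulOpposite.unop_op,
    Matrix.col_apply, mul_one] at h2

lemma entry_bound {M : Matrix d d ℂ} (hM : M.PosSemidef) (htr : M.trace = 1) (i j : d) :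
    ‖M i j‖ ≤ 1 := by
  have hdiag := diag_nonneg' hM
  have hre : ∀ k, 0 ≤ (M k k).re ∧ 0 = (M k k).im := fun k => Complex.nonneg_iff.mp (hdiag k)
  have hsum : ∑ k, (M k k).re = 1 := by
    have := congrArg Complex.re htr
    rwa [Matrix.trace, Complex.re_sum] at this
  by_cases hij : i = j
  · subst hij
    have him : (M i i).im = 0 := ((hre i).2).symm
    have : ‖M i i‖ = (M i i).re := by
      rw [Complex.norm_def, Complex.normSq_apply, him]
      rw [mul_zero, add_zero, ← pow_two]
      rw [Real.sqrt_sq (hre i).1]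
    rw [this, ← hsum]
    exact Finset.single_le_sum (f := fun k => (M k k).re) (fun k _ => (hre k).1) (Finset.mem_univ i)
  · by_cases h0 : M i j = 0
    · simp [h0]
    set r : ℝ := ‖M i j‖ with hr
    have hrpos : 0 < r := norm_pos_iff.mpr h0
    set c : ℂ := -(starRingEnd ℂ (M i j)) / r with hc
    have hji : M j i = starRingEnd ℂ (M i j) := by
      have := hM.1.apply j i
      simpa using this.symm
    have hquad := hM.dotProduct_mulVec_nonneg (Pi.single i 1 + Pi.single j c)
    have hstar : star (Pi.single i 1 + Pi.single j c : d → ℂ)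
        = Pi.single i 1 + Pi.single j (starRingEnd ℂ c) := by
      ext l
      by_cases h1 : l = i <;> by_cases h2 : l = j <;>
        simp_all [Pi.single_apply, hij]
    have hval : star (Pi.single i 1 + Pi.single j c : d → ℂ) ⬝ᵥ
        M *ᵥ (Pi.single i 1 + Pi.single j c) = M i i + M j j - 2 * r := by
      rw [hstar, Matrix.mulVec_add, Matrix.mulVec_single, Matrix.mulVec_single,
        add_dotProduct, single_dotProduct, single_dotProduct]
      simp only [Pi.add_apply, Pi.smul_apply, MulOpposite.smul_eq_mul_unop, MulOpposite.unop_op,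
        Matrix.col_apply, mul_one]
      have e1 : M i j * c = -r := by
        rw [hc, mul_div_assoc']
        rw [mul_neg, Complex.mul_conj]
        rw [Complex.normSq_eq_norm_sq, ← hr]
        push_cast
        rw [neg_div, pow_two, mul_div_assoc, div_self (by exact_mod_cast hrpos.ne')]
        ring
      have e2 : starRingEnd ℂ c * M j i = -r := by
        rw [hji, hc]
        rw [map_div₀, map_neg, Complex.conj_conj, Complex.conj_ofReal]
        rw [div_mul_eq_mul_div, neg_mul, Complex.mul_conj]
        rw [Complex.normSq_eq_norm_sq, ← hr]
        push_cast
        rw [neg_div, pow_two, mul_div_assoc, div_self (by exact_mod_cast hrpos.ne')]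
        ring
      have e3 : starRingEnd ℂ c * c = ((1 : ℝ) : ℂ) := by
        rw [← Complex.normSq_eq_conj_mul_self, hc]
        rw [Complex.normSq_div, Complex.normSq_neg, Complex.normSq_conj]
        rw [Complex.normSq_eq_norm_sq, ← hr]
        norm_cast
        rw [Complex.normSq_ofReal, pow_two, div_self (by positivity)]
      rw [one_mul, mul_add, e1, e2, mul_left_comm (starRingEnd ℂ c) (M j j) c, e3]
      push_cast
      ring
    rw [hval] at hquad
    rw [Complex.nonneg_iff] at hquad
    have h1 := hquad.1
    simp only [Complex.sub_re, Complex.add_re, Complex.mul_re, Complex.ofReal_re,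
      Complex.ofReal_im, Complex.re_ofNat, Complex.im_ofNat] at h1
    -- h1 : 0 ≤ M i i .re + M j j .re - 2 * r (roughly)
    have hle : (M i i).re + (M j j).re ≤ 1 := by
      rw [← hsum]
      have : ({i, j} : Finset d) ⊆ Finset.univ := Finset.subset_univ _
      calc (M i i).re + (M j j).re = ∑ k ∈ ({i, j} : Finset d), (M k k).re := by
            rw [Finset.sum_pair hij]
        _ ≤ ∑ k, (M k k).re := Finset.sum_le_sum_of_subset_of_nonneg this
            (fun k _ _ => (hre k).1)
    nlinarith [hrpos]


variable {Ω : Type*}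

lemma summable_entries {P : Ω → ℝ} (hPs : Summable P) (hP : ∀ ω, 0 ≤ P ω)
    {e : Type*} [Fintype e] [DecidableEq e]
    {f : Ω → Matrix e e ℂ} (hf : ∀ ω i j, ‖f ω i j‖ ≤ 1) :
    Summable (fun ω => P ω • f ω) := by
  refine Pi.summable.mpr fun i => Pi.summable.mpr fun j => ?_
  apply Summable.of_norm_bounded (g := P) hPs
  intro ω
  have : (P ω • f ω) i j = P ω • (f ω i j) := rfl
  rw [this, norm_smul, Real.norm_eq_abs, abs_of_nonneg (hP ω)]
  calc P ω * ‖f ω i j‖ ≤ P ω * 1 := by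
        exact mul_le_mul_of_nonneg_left (hf ω i j) (hP ω)
    _ = P ω := mul_one _

lemma tsum_matrix_apply {f : Ω → Matrix d d ℂ} (hf : Summable f) (i j : d) :
    (∑' ω, f ω) i j = ∑' ω, f ω i j := by
  have h1 := tsum_apply (f := fun ω => (f ω : d → d → ℂ)) hf (x := i)
  have h2 := tsum_apply (Pi.summable.mp hf i) (x := j)
  exact (congrFun h1 j).trans h2

lemma summable_matrix_apply {f : Ω → Matrix d d ℂ} (hf : Summable f) (i j : d) :
    Summable (fun ω => f ω i j) :=
  Pi.summable.mp (Pi.summable.mp hf i) j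

lemma quad_tsum {f : Ω → Matrix d d ℂ} (hf : Summable f) (v : d → ℂ) :
    star v ⬝ᵥ (∑' ω, f ω) *ᵥ v = ∑' ω, star v ⬝ᵥ f ω *ᵥ v := by
  have hsum : ∀ p : d × d, Summable (fun ω => star (v p.1) * (f ω p.1 p.2 * v p.2)) :=
    fun p => ((summable_matrix_apply hf p.1 p.2).mul_right (v p.2)).mul_left (star (v p.1))
  rw [quad_expand]
  have : ∀ p : d × d, star (v p.1) * ((∑' ω, f ω) p.1 p.2 * v p.2)
      = ∑' ω, star (v p.1) * (f ω p.1 p.2 * v p.2) := by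
    intro p
    rw [tsum_matrix_apply hf, ← tsum_mul_right, ← tsum_mul_left]
  rw [Finset.sum_congr rfl (fun p _ => this p)]
  rw [← Summable.tsum_finsetSum (fun p _ => hsum p)]
  exact tsum_congr fun ω => (quad_expand (f ω) v).symm

lemma summable_quad {f : Ω → Matrix d d ℂ} (hf : Summable f) (v : d → ℂ) :
    Summable (fun ω => star v ⬝ᵥ f ω *ᵥ v) := by
  have hsum : ∀ p : d × d, Summable (fun ω => star (v p.1) * (f ω p.1 p.2 * v p.2)) :=
    fun p => ((summable_matrix_apply hf p.1 p.2).mul_right (v p.2)).mul_left (star (v p.1))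
  have : (fun ω => star v ⬝ᵥ f ω *ᵥ v)
      = fun ω => ∑ p : d × d, star (v p.1) * (f ω p.1 p.2 * v p.2) := by
    funext ω; exact quad_expand (f ω) v
  rw [this]
  exact summable_sum (fun p _ => hsum p)

lemma tsum_posSemidef {f : Ω → Matrix d d ℂ} (hf : Summable f)
    (h : ∀ ω, (f ω).PosSemidef) : (∑' ω, f ω).PosSemidef := by
  refine Matrix.posSemidef_iff_dotProduct_mulVec.mpr ⟨?_, ?_⟩
  · unfold Matrix.IsHermitian
    rw [Matrix.conjTranspose_tsum]
    exact tsum_congr fun ω => (h ω).1.eq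
  · intro v
    rw [quad_tsum hf]
    rw [Complex.nonneg_iff]
    constructor
    · rw [Complex.re_tsum (summable_quad hf v)]
      exact tsum_nonneg fun ω => (Complex.nonneg_iff.mp ((h ω).dotProduct_mulVec_nonneg v)).1
    · rw [Complex.im_tsum (summable_quad hf v)]
      have hz : ∀ ω : Ω, (star v ⬝ᵥ f ω *ᵥ v).im = (0 : ℝ) :=
        fun ω => ((Complex.nonneg_iff.mp ((h ω).dotProduct_mulVec_nonneg v)).2).symm
      rw [tsum_congr hz, tsum_zero]

lemma trace_tsum' {f : Ω → Matrix d d ℂ} (hf : Summable f) :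
    (∑' ω, f ω).trace = ∑' ω, (f ω).trace := by
  simp only [Matrix.trace, Matrix.diag]
  rw [Summable.tsum_finsetSum (f := fun (i : d) (ω : Ω) => f ω i i) (fun i _ => summable_matrix_apply hf i i)]
  exact Finset.sum_congr rfl fun i _ => tsum_matrix_apply hf i i


lemma trace_abs_le {B : Matrix d d ℂ} (hB : B.IsHermitian) :
    (matAbs B).trace.re ≤ Real.sqrt ((B.rank : ℝ) * ((B * B)).trace.re) := by
  set U : Matrix d d ℂ := (hB.eigenvectorUnitary : Matrix d d ℂ) with hUdef
  set lam := hB.eigenvalues with hlam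
  have hU1 : U * star U = 1 := Matrix.mem_unitaryGroup_iff.mp hB.eigenvectorUnitary.2
  have hU2 : star U * U = 1 := Matrix.mem_unitaryGroup_iff'.mp hB.eigenvectorUnitary.2
  have spec : B = U * Matrix.diagonal (RCLike.ofReal ∘ lam) * star U := hB.spectral_theorem
  have conj_diag : ∀ g : d → ℝ,
      (U * Matrix.diagonal (fun i => ((g i : ℝ) : ℂ)) * star U)
       * (U * Matrix.diagonal (fun i => ((g i : ℝ) : ℂ)) * star U)
      = U * Matrix.diagonal (fun i => ((g i * g i : ℝ) : ℂ)) * star U := by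
    intro g
    calc (U * Matrix.diagonal (fun i => ((g i : ℝ) : ℂ)) * star U)
           * (U * Matrix.diagonal (fun i => ((g i : ℝ) : ℂ)) * star U)
        = U * Matrix.diagonal (fun i => ((g i : ℝ) : ℂ)) * (star U * U)
            * Matrix.diagonal (fun i => ((g i : ℝ) : ℂ)) * star U := by
          simp only [Matrix.mul_assoc]
      _ = U * (Matrix.diagonal (fun i => ((g i : ℝ) : ℂ))
            * Matrix.diagonal (fun i => ((g i : ℝ) : ℂ))) * star U := by
          rw [hU2]; simp only [Matrix.mul_assoc, Matrix.one_mul]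
      _ = U * Matrix.diagonal (fun i => ((g i * g i : ℝ) : ℂ)) * star U := by
          rw [Matrix.diagonal_mul_diagonal]
          congr 1
          · congr 1; funext i; push_cast; ring
  have trace_conj : ∀ g : d → ℝ,
      (U * Matrix.diagonal (fun i => ((g i : ℝ) : ℂ)) * star U).trace
        = ∑ i, ((g i : ℝ) : ℂ) := by
    intro g
    rw [Matrix.trace_mul_cycle, hU2, Matrix.one_mul, Matrix.trace_diagonal]
  have specB : B = U * Matrix.diagonal (fun i => ((lam i : ℝ) : ℂ)) * star U := by
    rw [spec]; rfl
  have habs : matAbs B = U * Matrix.diagonal (fun i => ((|lam i| : ℝ) : ℂ)) * star U := by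
    symm
    apply eq_matAbs_of_sq_eq
    · have hD : (Matrix.diagonal (fun i => ((|lam i| : ℝ) : ℂ))).PosSemidef :=
        Matrix.posSemidef_diagonal_iff.mpr fun i => by
          rw [Complex.nonneg_iff]; constructor <;> simp [abs_nonneg]
      have := hD.mul_mul_conjTranspose_same U
      rwa [← Matrix.star_eq_conjTranspose] at this
    · rw [pow_two, conj_diag]
      have : B * Bᴴ = B * B := by rw [hB.eq]
      rw [this]
      have hfun : (fun i => ((|lam i| * |lam i| : ℝ) : ℂ))
          = fun i => ((lam i * lam i : ℝ) : ℂ) := by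
        funext i; rw [abs_mul_abs_self]
      rw [hfun, ← conj_diag lam, ← specB]
  have h1 : (matAbs B).trace.re = ∑ i, |lam i| := by
    rw [habs, trace_conj, Complex.re_sum]
    simp
  have hBB : (B * B).trace.re = ∑ i, lam i * lam i := by
    have : B * B = U * Matrix.diagonal (fun i => ((lam i * lam i : ℝ) : ℂ)) * star U := by
      rw [← conj_diag lam, ← specB]
    rw [this, trace_conj, Complex.re_sum]
    simp
  rw [h1, hBB]
  -- Cauchy–Schwarz
  classical
  set s : Finset d := Finset.univ.filter (fun i => lam i ≠ 0) with hs
  have hcard : (s.card : ℝ) = (B.rank : ℝ) := by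
    rw [hB.rank_eq_card_non_zero_eigs]
    norm_cast
    rw [Fintype.card_subtype]
  have hsum_eq : ∑ i, |lam i| = ∑ i ∈ s, |lam i| := by
    symm
    apply Finset.sum_filter_of_ne
    intro x _ hx
    exact fun h => hx (by rw [h, abs_zero])
  have key : (∑ i ∈ s, |lam i|) ^ 2 ≤ (s.card : ℝ) * ∑ i ∈ s, |lam i| ^ 2 :=
    sq_sum_le_card_mul_sum_sq
  have hle2 : ∑ i ∈ s, |lam i| ^ 2 ≤ ∑ i, lam i * lam i := by
    calc ∑ i ∈ s, |lam i| ^ 2 = ∑ i ∈ s, lam i * lam i := by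
          apply Finset.sum_congr rfl; intro i _
          rw [pow_two, abs_mul_abs_self]
      _ ≤ ∑ i, lam i * lam i := Finset.sum_le_sum_of_subset_of_nonneg
          (Finset.subset_univ s) (fun i _ _ => mul_self_nonneg _)
  have hnn : 0 ≤ ∑ i, |lam i| := Finset.sum_nonneg fun i _ => abs_nonneg _
  rw [← Real.sqrt_sq hnn]
  apply Real.sqrt_le_sqrt
  rw [hsum_eq]
  calc (∑ i ∈ s, |lam i|) ^ 2 ≤ (s.card : ℝ) * ∑ i ∈ s, |lam i| ^ 2 := key
    _ ≤ (B.rank : ℝ) * ∑ i, lam i * lam i := by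
        rw [← hcard]
        apply mul_le_mul_of_nonneg_left hle2 (Nat.cast_nonneg _)


lemma rank_le_of_ker {B T : Matrix d d ℂ} (h : ∀ v, T *ᵥ v = 0 → B *ᵥ v = 0) :
    B.rank ≤ T.rank := by
  have hker : LinearMap.ker T.mulVecLin ≤ LinearMap.ker B.mulVecLin := by
    intro v hv
    rw [LinearMap.mem_ker] at hv ⊢
    rw [Matrix.mulVecLin_apply] at hv ⊢
    exact h v hv
  have h1 := LinearMap.finrank_range_add_finrank_ker B.mulVecLin
  have h2 := LinearMap.finrank_range_add_finrank_ker T.mulVecLin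
  have h3 : Module.finrank ℂ (LinearMap.ker T.mulVecLin)
      ≤ Module.finrank ℂ (LinearMap.ker B.mulVecLin) := Submodule.finrank_mono hker
  have hBr : B.rank = Module.finrank ℂ (LinearMap.range B.mulVecLin) := rfl
  have hTr : T.rank = Module.finrank ℂ (LinearMap.range T.mulVecLin) := rfl
  omega

lemma mulVec_eq_zero_of_sandwich {S T : Matrix d d ℂ} (hS : S.PosSemidef)
    (hTS : (T - S).PosSemidef) {v : d → ℂ} (hv : T *ᵥ v = 0) : S *ᵥ v = 0 := by
  have h1 : star v ⬝ᵥ T *ᵥ v = 0 := by rw [hv, dotProduct_zero]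
  have h3 := hTS.dotProduct_mulVec_nonneg v
  have h4 := hS.dotProduct_mulVec_nonneg v
  rw [Matrix.sub_mulVec, dotProduct_sub, h1, zero_sub] at h3
  have hq : star v ⬝ᵥ S *ᵥ v = 0 := le_antisymm (neg_nonneg.mp h3) h4
  exact (hS.dotProduct_mulVec_zero_iff v).mp hq

lemma rank_pos_of_trace_one {T : Matrix d d ℂ} (h : T.trace = 1) : 1 ≤ T.rank := by
  by_contra hcon
  push_neg at hcon
  interval_cases hr : T.rank
  · have hrange : LinearMap.range T.mulVecLin = ⊥ := by
      have : Module.finrank ℂ (LinearMap.range T.mulVecLin) = 0 := hr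
      exact Submodule.finrank_eq_zero.mp this
    have hz : ∀ v, T *ᵥ v = 0 := by
      intro v
      have : T.mulVecLin v ∈ LinearMap.range T.mulVecLin := LinearMap.mem_range_self _ v
      rw [hrange, Submodule.mem_bot] at this
      rwa [Matrix.mulVecLin_apply] at this
    have hT0 : T = 0 := by
      ext i j
      have := congrFun (hz (Pi.single j 1)) i
      rw [Matrix.mulVec_single] at this
      simpa using this
    rw [hT0, Matrix.trace_zero] at h
    exact one_ne_zero h.symm

variable {𝒳 : Type*} [Fintype 𝒳] [DecidableEq 𝒳]

lemma kron_herm (x : 𝒳) {Q : Matrix d d ℂ} (hQ : Q.IsHermitian) :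
    (Matrix.single x x (1:ℂ) ⊗ₖ Q).IsHermitian := by
  unfold Matrix.IsHermitian
  ext ⟨p1, p2⟩ ⟨q1, q2⟩
  show star (Matrix.single x x (1:ℂ) q1 p1 * Q q2 p2) = _
  have hQ' : star (Q q2 p2) = Q p2 q2 := by
    conv_rhs => rw [← hQ.eq]
    rfl
  have hE : star (Matrix.single x x (1:ℂ) q1 p1)
      = Matrix.single x x (1:ℂ) p1 q1 := by
    simp [Matrix.single, and_comm, apply_ite]
  rw [star_mul', hQ', hE, Matrix.kroneckerMap_apply]

open scoped MatrixOrder in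
lemma kron_psd (x : 𝒳) {Q : Matrix d d ℂ} (hQ : Q.PosSemidef) :
    (Matrix.single x x (1:ℂ) ⊗ₖ Q).PosSemidef := by
  have hS := (CFC.sqrt_nonneg Q).posSemidef
  have hherm := kron_herm x hS.1
  have key : (Matrix.single x x (1:ℂ) ⊗ₖ CFC.sqrt Q)ᴴ
      * (Matrix.single x x (1:ℂ) ⊗ₖ CFC.sqrt Q)
      = Matrix.single x x (1:ℂ) ⊗ₖ Q := by
    rw [hherm.eq, ← Matrix.mul_kronecker_mul, Matrix.single_mul_single_same, one_mul,
      CFC.sqrt_mul_sqrt_self Q hQ.nonneg]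
  exact key ▸ Matrix.posSemidef_conjTranspose_mul_self _

lemma blockSum_mul (C D : 𝒳 → Matrix d d ℂ) :
    (∑ x, Matrix.single x x (1:ℂ) ⊗ₖ C x)
      * (∑ y, Matrix.single y y (1:ℂ) ⊗ₖ D y)
      = ∑ x, Matrix.single x x (1:ℂ) ⊗ₖ (C x * D x) := by
  rw [Finset.sum_mul_sum]
  apply Finset.sum_congr rfl; intro x _
  rw [Finset.sum_eq_single x]
  · rw [← Matrix.mul_kronecker_mul, Matrix.single_mul_single_same, one_mul]
  · intro y _ hyx
    rw [← Matrix.mul_kronecker_mul, Matrix.single_mul_single_of_ne (h := Ne.symm hyx),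
      Matrix.zero_kronecker]
  · intro hx; exact absurd (Finset.mem_univ x) hx

lemma blockSum_trace (C : 𝒳 → Matrix d d ℂ) :
    (∑ x, Matrix.single x x (1:ℂ) ⊗ₖ C x).trace = ∑ x, (C x).trace := by
  rw [Matrix.trace_sum]
  apply Finset.sum_congr rfl; intro x _
  rw [Matrix.trace_kronecker, Matrix.trace_single_eq_same, one_mul]

lemma blockSum_herm {C : 𝒳 → Matrix d d ℂ} (hC : ∀ x, (C x).IsHermitian) :
    (∑ x, Matrix.single x x (1:ℂ) ⊗ₖ C x).IsHermitian :=
  Finset.sum_induction _ _ (fun a b ha hb => ha.add hb) Matrix.isHermitian_zero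
    (fun x _ => kron_herm x (hC x))

lemma abs_blockSum {Bf : 𝒳 → Matrix d d ℂ} (hB : ∀ x, (Bf x).IsHermitian) :
    matAbs (∑ x, Matrix.single x x (1:ℂ) ⊗ₖ Bf x)
      = ∑ x, Matrix.single x x (1:ℂ) ⊗ₖ matAbs (Bf x) := by
  symm
  apply eq_matAbs_of_sq_eq
  · exact Finset.sum_induction _ _ (fun a b ha hb => ha.add hb) Matrix.PosSemidef.zero
      (fun x _ => kron_psd x (matAbs_psd (Bf x)))
  · rw [pow_two, blockSum_mul, (blockSum_herm hB).eq, blockSum_mul]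
    apply Finset.sum_congr rfl; intro x _
    congr 1
    have h1 : matAbs (Bf x) * matAbs (Bf x) = Bf x * (Bf x)ᴴ :=
      matAbs_mul_self (Bf x)
    rw [h1, (hB x).eq]


lemma kron_sub_right (E : Matrix 𝒳 𝒳 ℂ) (C D : Matrix d d ℂ) :
    E ⊗ₖ (C - D) = E ⊗ₖ C - E ⊗ₖ D := by
  ext ⟨p1, p2⟩ ⟨q1, q2⟩
  simp [Matrix.kroneckerMap_apply, mul_sub]

lemma uniform_kron (T : Matrix d d ℂ) :
    uniformState 𝒳 ⊗ₖ T
      = ∑ x, Matrix.single x x (1:ℂ) ⊗ₖ ((Fintype.card 𝒳 : ℂ)⁻¹ • T) := by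
  ext ⟨p1, p2⟩ ⟨q1, q2⟩
  simp only [Matrix.kroneckerMap_apply, uniformState, Matrix.smul_apply, Matrix.one_apply,
    Matrix.sum_apply, smul_eq_mul]
  by_cases h : p1 = q1
  · subst h
    rw [Finset.sum_eq_single p1]
    · simp [Matrix.single]
    · intro y _ hy
      simp only [Matrix.single, Matrix.of_apply]
      rw [if_neg (fun hc => hy ((hc : y = p1 ∧ y = p1).1)), zero_mul]
    · intro hx; exact absurd (Finset.mem_univ p1) hx
  · rw [if_neg h, Finset.sum_eq_zero]
    · simp
    · intro x _
      simp only [Matrix.single, Matrix.of_apply]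
      rw [if_neg (fun hc => h (((hc : x = p1 ∧ x = q1).1.symm).trans hc.2)), zero_mul]

lemma tsum_smul_kron {Ω : Type*} (x : 𝒳) (c : Ω → ℝ) (ρ : Ω → Matrix d d ℂ)
    (hsum : Summable (fun ω => c ω • (Matrix.single x x (1:ℂ) ⊗ₖ ρ ω)))
    (hsum2 : Summable (fun ω => c ω • ρ ω)) :
    (∑' ω, c ω • (Matrix.single x x (1:ℂ) ⊗ₖ ρ ω))
      = Matrix.single x x (1:ℂ) ⊗ₖ (∑' ω, c ω • ρ ω) := by
  ext ⟨p1, p2⟩ ⟨q1, q2⟩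
  rw [tsum_matrix_apply hsum, Matrix.kroneckerMap_apply, tsum_matrix_apply hsum2]
  have : ∀ ω, (c ω • (Matrix.single x x (1:ℂ) ⊗ₖ ρ ω)) (p1, p2) (q1, q2)
      = Matrix.single x x (1:ℂ) p1 q1 * (c ω • ρ ω) p2 q2 := by
    intro ω
    show c ω • (Matrix.single x x (1:ℂ) p1 q1 * ρ ω p2 q2)
      = Matrix.single x x (1:ℂ) p1 q1 * (c ω • ρ ω p2 q2)
    rw [mul_smul_comm]
  rw [tsum_congr this, tsum_mul_left]

end Aux

/-- **Lemma 6.** `d(X|ρ) ≤ (1/2) 2^{S₀([ρ])/2} √(|𝒳| · D(X|ρ))`. -/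
theorem stmt_7 {Ω 𝒳 d : Type*} [Countable Ω] [Fintype 𝒳] [DecidableEq 𝒳]
    [Fintype d] [DecidableEq d]
    (P : Ω → ℝ) (hP : ∀ ω, 0 ≤ P ω) (hP1 : ∑' ω, P ω = 1)
    (X : Ω → 𝒳) (ρ : Ω → Matrix d d ℂ) (hρ : ∀ ω, IsDensityOp (ρ ω)) :
    nonUnif P X ρ
      ≤ (1 / 2) * (2 : ℝ) ^ (renyiS0 (expState P ρ) / 2) *
          Real.sqrt ((Fintype.card 𝒳 : ℝ) * DNonUnif P X ρ) := by
  classical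
  simp only [nonUnif, DNonUnif, traceDist, hsDistSq, renyiS0]
  have hPs : Summable P := by
    by_contra hcon
    rw [tsum_eq_zero_of_not_summable hcon] at hP1
    exact one_ne_zero hP1.symm
  have hρb : ∀ ω i j, ‖ρ ω i j‖ ≤ 1 := fun ω i j => entry_bound (hρ ω).1 (hρ ω).2 i j
  set T : Matrix d d ℂ := expState P ρ with hT
  set ρx : 𝒳 → Matrix d d ℂ := fun x => ∑' ω, (if X ω = x then P ω else 0) • ρ ω with hρx
  set Bf : 𝒳 → Matrix d d ℂ := fun x => ρx x - (Fintype.card 𝒳 : ℂ)⁻¹ • T with hBf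
  -- summability facts
  have hS1 : Summable (fun ω => P ω • ρ ω) := summable_entries hPs hP hρb
  have hEb : ∀ (x p1 q1 : 𝒳), ‖(Matrix.single x x (1:ℂ)) p1 q1‖ ≤ 1 := by
    intro x p1 q1
    simp only [Matrix.single, Matrix.of_apply]
    split <;> simp
  have hkronb : ∀ (x : 𝒳) (ω : Ω) (p q : 𝒳 × d),
      ‖(Matrix.single x x (1:ℂ) ⊗ₖ ρ ω) p q‖ ≤ 1 := by
    intro x ω p q
    rw [Matrix.kroneckerMap_apply, norm_mul]
    calc ‖Matrix.single x x (1:ℂ) p.1 q.1‖ * ‖ρ ω p.2 q.2‖ ≤ 1 * 1 :=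
        mul_le_mul (hEb x p.1 q.1) (hρb ω p.2 q.2) (norm_nonneg _) zero_le_one
      _ = 1 := one_mul 1
  have hS2 : Summable (fun ω => P ω • (classicalState (X ω) ⊗ₖ ρ ω)) :=
    summable_entries hPs hP (fun ω => hkronb (X ω) ω)
  have hindnn : ∀ (x : 𝒳) ω, 0 ≤ (if X ω = x then P ω else 0) := by
    intro x ω; split
    · exact hP ω
    · exact le_refl 0
  have hind : ∀ x : 𝒳, Summable (fun ω => if X ω = x then P ω else 0) := by
    intro x
    apply Summable.of_nonneg_of_le (hindnn x) _ hPs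
    intro ω; split
    · exact le_refl _
    · exact hP ω
  have hS3 : ∀ x, Summable (fun ω => (if X ω = x then P ω else 0) • ρ ω) := fun x =>
    summable_entries (hind x) (hindnn x) hρb
  have hS4 : ∀ x, Summable
      (fun ω => (if X ω = x then P ω else 0) • (Matrix.single x x (1:ℂ) ⊗ₖ ρ ω)) :=
    fun x => summable_entries (hind x) (hindnn x) (hkronb x)
  -- properties of T
  have hTpsd : T.PosSemidef := tsum_posSemidef hS1 (fun ω => smul_posSemidef (hP ω) (hρ ω).1)
  have hTtr : T.trace = 1 := by
    rw [hT, expState, trace_tsum' hS1]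
    have hterm : ∀ ω : Ω, (P ω • ρ ω).trace = ((P ω : ℝ) : ℂ) := by
      intro ω
      rw [Matrix.trace_smul, (hρ ω).2]
      simp [Complex.real_smul]
    rw [tsum_congr hterm, ← Complex.ofReal_tsum, hP1, Complex.ofReal_one]
  have hρxpsd : ∀ x, (ρx x).PosSemidef := fun x =>
    tsum_posSemidef (hS3 x) (fun ω => smul_posSemidef (hindnn x ω) (hρ ω).1)
  have hTsub : ∀ x, (T - ρx x).PosSemidef := by
    intro x
    have hnn2 : ∀ ω, 0 ≤ (if X ω = x then 0 else P ω) := by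
      intro ω; split
      · exact le_refl 0
      · exact hP ω
    have hsum5 : Summable (fun ω => (if X ω = x then 0 else P ω) • ρ ω) := by
      apply summable_entries _ hnn2 hρb
      apply Summable.of_nonneg_of_le hnn2 _ hPs
      intro ω; split
      · exact hP ω
      · exact le_refl _
    have heq : T - ρx x = ∑' ω, ((if X ω = x then 0 else P ω) • ρ ω) := by
      rw [hT, hρx, expState, ← Summable.tsum_sub hS1 (hS3 x)]
      apply tsum_congr; intro ω
      by_cases hxx : X ω = x
      · simp [hxx]
      · simp [hxx]
    rw [heq]
    exact tsum_posSemidef hsum5 (fun ω => smul_posSemidef (hnn2 ω) (hρ ω).1)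
  -- properties of the blocks
  have hcinv : star ((Fintype.card 𝒳 : ℂ)⁻¹) = (Fintype.card 𝒳 : ℂ)⁻¹ := by
    simp
  have hBherm : ∀ x, (Bf x).IsHermitian := fun x =>
    ((hρxpsd x).1).sub (isHermitian_smul_of_star_eq hTpsd.1 hcinv)
  have hBker : ∀ (x : 𝒳) (v : d → ℂ), T *ᵥ v = 0 → Bf x *ᵥ v = 0 := by
    intro x v hv
    have h1 : ρx x *ᵥ v = 0 := mulVec_eq_zero_of_sandwich (hρxpsd x) (hTsub x) hv
    show (ρx x - (Fintype.card 𝒳 : ℂ)⁻¹ • T) *ᵥ v = 0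
    rw [Matrix.sub_mulVec, h1, Matrix.smul_mulVec, hv, smul_zero, sub_zero]
  have hBrank : ∀ x, (Bf x).rank ≤ T.rank := fun x => rank_le_of_ker (hBker x)
  -- block decomposition
  have hM : expState P (fun ω => classicalState (X ω) ⊗ₖ ρ ω)
      = ∑ x, Matrix.single x x (1:ℂ) ⊗ₖ ρx x := by
    rw [expState]
    have hpoint : ∀ ω, P ω • (classicalState (X ω) ⊗ₖ ρ ω)
        = ∑ x, (if X ω = x then P ω else 0) • (Matrix.single x x (1:ℂ) ⊗ₖ ρ ω) := by
      intro ω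
      rw [Finset.sum_eq_single (X ω)]
      · rw [if_pos rfl]; rfl
      · intro y _ hy
        rw [if_neg (fun hc => hy hc.symm), zero_smul]
      · intro hx; exact absurd (Finset.mem_univ _) hx
    rw [tsum_congr hpoint, Summable.tsum_finsetSum (fun x _ => hS4 x)]
    exact Finset.sum_congr rfl fun x _ => tsum_smul_kron x _ ρ (hS4 x) (hS3 x)
  have hAN : expState P (fun ω => classicalState (X ω) ⊗ₖ ρ ω) - uniformState 𝒳 ⊗ₖ T
      = ∑ x, Matrix.single x x (1:ℂ) ⊗ₖ Bf x := by
    rw [hM, uniform_kron, ← Finset.sum_sub_distrib]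
    apply Finset.sum_congr rfl; intro x _
    rw [show Bf x = ρx x - (Fintype.card 𝒳 : ℂ)⁻¹ • T from rfl, kron_sub_right]
  -- rewrite the two quantities
  rw [hAN]
  rw [abs_blockSum hBherm, blockSum_trace, blockSum_mul, blockSum_trace, Complex.re_sum,
    Complex.re_sum]
  -- bounds per block
  have htx_nn : ∀ x, 0 ≤ ((Bf x * Bf x)).trace.re := by
    intro x
    have hBB : Bf x * Bf x = Bf x * (Bf x)ᴴ := by rw [(hBherm x).eq]
    rw [hBB]
    exact psd_trace_re_nonneg (Matrix.posSemidef_self_mul_conjTranspose _)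
  set r : ℝ := (T.rank : ℝ) with hr
  have hr0 : 0 ≤ r := Nat.cast_nonneg _
  have hrankpos : 1 ≤ T.rank := rank_pos_of_trace_one hTtr
  have hr1 : (1 : ℝ) ≤ r := by rw [hr]; exact_mod_cast hrankpos
  have hblock : ∀ x, (matAbs (Bf x)).trace.re
      ≤ Real.sqrt (r * ((Bf x * Bf x)).trace.re) := by
    intro x
    refine (trace_abs_le (hBherm x)).trans (Real.sqrt_le_sqrt ?_)
    apply mul_le_mul_of_nonneg_right _ (htx_nn x)
    rw [hr]
    exact_mod_cast hBrank x
  have hsum_b : ∑ x, (matAbs (Bf x)).trace.re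
      ≤ Real.sqrt r * ∑ x, Real.sqrt ((Bf x * Bf x).trace.re) := by
    rw [Finset.mul_sum]
    refine (Finset.sum_le_sum fun x _ => hblock x).trans_eq ?_
    exact Finset.sum_congr rfl fun x _ => Real.sqrt_mul hr0 _
  have hCS : ∑ x, Real.sqrt ((Bf x * Bf x).trace.re)
      ≤ Real.sqrt ((Fintype.card 𝒳 : ℝ) * ∑ x, (Bf x * Bf x).trace.re) := by
    have hnn : 0 ≤ ∑ x, Real.sqrt ((Bf x * Bf x).trace.re) :=
      Finset.sum_nonneg fun x _ => Real.sqrt_nonneg _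
    rw [← Real.sqrt_sq hnn]
    apply Real.sqrt_le_sqrt
    calc (∑ x, Real.sqrt ((Bf x * Bf x).trace.re)) ^ 2
        ≤ (Finset.univ.card : ℝ) * ∑ x, Real.sqrt ((Bf x * Bf x).trace.re) ^ 2 :=
          sq_sum_le_card_mul_sum_sq
      _ = (Fintype.card 𝒳 : ℝ) * ∑ x, (Bf x * Bf x).trace.re := by
          rw [Finset.card_univ]
          congr 1
          exact Finset.sum_congr rfl fun x _ => Real.sq_sqrt (htx_nn x)
  have hpow : (2:ℝ) ^ (Real.logb 2 (T.rank) / 2) = Real.sqrt r := by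
    have h2 : Real.logb 2 (T.rank) / 2 = Real.logb 2 r * (1/2) := by rw [hr]; ring
    rw [h2, Real.rpow_mul (by norm_num : (0:ℝ) ≤ 2),
      Real.rpow_logb (by norm_num) (by norm_num) (lt_of_lt_of_le zero_lt_one hr1),
      ← Real.sqrt_eq_rpow]
  rw [hpow]
  have hfinal : ∑ x, (matAbs (Bf x)).trace.re
      ≤ Real.sqrt r * Real.sqrt ((Fintype.card 𝒳 : ℝ) * ∑ x, (Bf x * Bf x).trace.re) :=
    hsum_b.trans (mul_le_mul_of_nonneg_left hCS (Real.sqrt_nonneg _))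
  calc (1:ℝ)/2 * (∑ x, (matAbs (Bf x)).trace.re)
      ≤ 1/2 * (Real.sqrt r
          * Real.sqrt ((Fintype.card 𝒳 : ℝ) * ∑ x, (Bf x * Bf x).trace.re)) := by
        apply mul_le_mul_of_nonneg_left hfinal (by norm_num)
    _ = 1/2 * Real.sqrt r
          * Real.sqrt ((Fintype.card 𝒳 : ℝ) * ∑ x, (Bf x * Bf x).trace.re) := by ring

end
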